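/- arXiv:2201.11206 — 2 statements merged into one kernel-verified Lean document; each statement's English description precedes it below -/
import Mathlib

section
/- If $x \ge C (2n)^n \log^n(2n C B)$ for real numbers $n, C, B \ge 1$, then $x \ge C \log^n(B x)$. -/
set_option maxHeartbeats 1000000


theorem stmt0 (x n C B : ℝ) (hn : 1 ≤ n) (hC : 1 ≤ C) (hB : 1 ≤ B) (hx : 0 < x)
    (h : C * (2 * n) ^ n * (Real.log (2 * n * C * B)) ^ n ≤ x) :
    C * (Real.log (B * x)) ^ n ≤ x := by
  set L : ℝ := Real.log (2 * n * C * B) with hLdef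
  have hn0 : (0:ℝ) < n := by linarith
  have hC0 : (0:ℝ) < C := by linarith
  have hB0 : (0:ℝ) < B := by linarith
  have h2n : (2:ℝ) ≤ 2 * n := by linarith
  have hCB : (1:ℝ) ≤ C * B := by nlinarith
  have h2nCB : (2:ℝ) ≤ 2 * n * C * B := by nlinarith [mul_le_mul h2n hCB zero_le_one (by linarith : (0:ℝ) ≤ 2 * n)]
  have hlog2L : Real.log 2 ≤ L := Real.log_le_log (by norm_num) h2nCB
  have hlog2 : (0.6931471803 : ℝ) < Real.log 2 := Real.log_two_gt_d9
  have hLpos : (0:ℝ) < L := by linarith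
  have hLhalf : (1:ℝ) / 2 < L := by linarith
  -- log(2n) ≤ L
  have hlog2n : Real.log (2 * n) ≤ L := by
    apply Real.log_le_log (by linarith)
    nlinarith [mul_le_mul_of_nonneg_left hCB (by linarith : (0:ℝ) ≤ 2 * n)]
  -- L as a sum of logs
  have hLsum : L = Real.log (2 * n) + Real.log C + Real.log B := by
    rw [hLdef, Real.log_mul (by positivity) (by positivity),
      Real.log_mul (by positivity) (by positivity)]
  have hlogC : (0:ℝ) ≤ Real.log C := Real.log_nonneg hC
  have hlogB : (0:ℝ) ≤ Real.log B := Real.log_nonneg hB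
  have hlogL : Real.log L ≤ L := le_trans (Real.log_le_sub_one_of_pos hLpos) (by linarith)
  set s : ℝ := 2 * n * L with hsdef
  have hs_pos : (0:ℝ) < s := by positivity
  have hs1 : (1:ℝ) < s := by nlinarith
  -- x/C ≥ s^n
  have hxC : s ^ n ≤ x / C := by
    rw [hsdef, Real.mul_rpow (by positivity) hLpos.le]
    rw [le_div_iff₀ hC0]
    nlinarith [h]
  set t : ℝ := (x / C) ^ n⁻¹ with htdef
  have hxC0 : (0:ℝ) < x / C := by positivity
  have ht_eq : t ^ n = x / C := Real.rpow_inv_rpow hxC0.le (by positivity)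
  have hts : s ≤ t := by
    calc s = (s ^ n) ^ n⁻¹ := (Real.rpow_rpow_inv hs_pos.le (by positivity)).symm
    _ ≤ t := Real.rpow_le_rpow (by positivity) hxC (by positivity)
  have ht_pos : (0:ℝ) < t := lt_of_lt_of_le hs_pos hts
  -- log(Bx) = log B + log C + n log t
  have hx_eq : x = C * t ^ n := by
    rw [ht_eq]; field_simp
  have hlogBx : Real.log (B * x) = Real.log B + Real.log C + n * Real.log t := by
    rw [hx_eq, Real.log_mul (by positivity) (by positivity),
      Real.log_mul (by positivity) (by positivity), Real.log_rpow ht_pos]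
    ring
  -- base case: log B + log C + n * log s ≤ s
  have hlogs : Real.log s = Real.log (2 * n) + Real.log L := by
    rw [hsdef, Real.log_mul (by positivity) (by positivity)]
  have hbase : Real.log B + Real.log C + n * Real.log s ≤ s := by
    rw [hlogs, hsdef]
    nlinarith [mul_nonneg (sub_nonneg.mpr hn) (sub_nonneg.mpr hlog2n),
      mul_nonneg hn0.le (sub_nonneg.mpr hlogL), hLsum]
  -- tangent step: n * log t ≤ n * log s + (t - s)
  have hstep : n * Real.log t ≤ n * Real.log s + (t - s) := by
    have h1 : Real.log t - Real.log s ≤ t / s - 1 := by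
      have := Real.log_le_sub_one_of_pos (show (0:ℝ) < t / s by positivity)
      rwa [Real.log_div (by positivity) (by positivity)] at this
    have h2 : n * (t / s - 1) ≤ t - s := by
      have hts' : 0 ≤ t - s := by linarith
      have heq : n * (t / s - 1) = (t - s) / (2 * L) := by
        rw [hsdef]; field_simp
      rw [heq, div_le_iff₀ (by linarith : (0:ℝ) < 2 * L)]
      nlinarith [mul_nonneg hts' (by linarith : (0:ℝ) ≤ 2 * L - 1)]
    nlinarith [mul_le_mul_of_nonneg_left h1 hn0.le]
  have hkey : Real.log (B * x) ≤ t := by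
    rw [hlogBx]; linarith
  -- finish
  have hlogBx_nonneg : (0:ℝ) ≤ Real.log (B * x) := by
    rw [hlogBx]
    have : (0:ℝ) ≤ Real.log t := Real.log_nonneg (by linarith)
    nlinarith
  calc C * Real.log (B * x) ^ n ≤ C * t ^ n := by
        apply mul_le_mul_of_nonneg_left (Real.rpow_le_rpow hlogBx_nonneg hkey hn0.le) hC0.le
    _ = x := hx_eq.symm
end

section
/- Let $(\bm{x}_t)_{t=1}^T$ be vectors in $\mathbb{R}^d$ with $\|\bm{x}_t\|_2 \le a$ for all $t$, and let $V_t = \lambda I + \sum_{s=1}^t \bm{x}_s \bm{x}_s^\top$ where $\lambda \ge \max\{1, a^2\}$. Then $\sum_{t=1}^T \bm{x}_t^\top V_{t-1}^{-1} \bm{x}_t \le 2d \log(1 + a^2 T/(d\lambda))$. -/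
open Matrix

namespace Stmt9Aux

open Finset

variable {d : ℕ}

lemma vmv_mulVec (y v : Fin d → ℝ) : vecMulVec y y *ᵥ v = (y ⬝ᵥ v) • y := by
  ext i
  simp only [mulVec, vecMulVec_apply, dotProduct, Pi.smul_apply, smul_eq_mul, Finset.sum_mul]
  exact Finset.sum_congr rfl fun j _ => by ring

lemma posSemidef_vmv (y : Fin d → ℝ) : (vecMulVec y y).PosSemidef := by
  refine PosSemidef.of_dotProduct_mulVec_nonneg ?_ fun v => ?_
  · ext i j
    simp [vecMulVec_apply, conjTranspose_apply, mul_comm]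
  · rw [vmv_mulVec]
    simp only [star_trivial, dotProduct_smul, smul_eq_mul]
    rw [dotProduct_comm]
    exact mul_self_nonneg _

lemma dot_self_nonneg (v : Fin d → ℝ) : 0 ≤ v ⬝ᵥ v :=
  Finset.sum_nonneg fun i _ => mul_self_nonneg _

lemma sum_mulVec' {ι : Type*} (s : Finset ι) (f : ι → Matrix (Fin d) (Fin d) ℝ)
    (v : Fin d → ℝ) : (∑ i ∈ s, f i) *ᵥ v = ∑ i ∈ s, f i *ᵥ v := by
  classical
  induction s using Finset.cons_induction with
  | empty => simp
  | cons a s ha ih => rw [Finset.sum_cons, Finset.sum_cons, Matrix.add_mulVec, ih]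

lemma dotProduct_sum' {ι : Type*} (s : Finset ι) (v : Fin d → ℝ) (f : ι → Fin d → ℝ) :
    v ⬝ᵥ (∑ i ∈ s, f i) = ∑ i ∈ s, v ⬝ᵥ f i := by
  classical
  induction s using Finset.cons_induction with
  | empty => simp
  | cons a s ha ih => rw [Finset.sum_cons, Finset.sum_cons, dotProduct_add, ih]

/-- The regularized Gram matrix. -/
noncomputable def Vm (lam : ℝ) (x : ℕ → Fin d → ℝ) (t : ℕ) : Matrix (Fin d) (Fin d) ℝ :=
  lam • 1 + ∑ s ∈ Finset.range t, vecMulVec (x s) (x s)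

lemma Vm_succ (lam : ℝ) (x : ℕ → Fin d → ℝ) (t : ℕ) :
    Vm lam x (t + 1) = Vm lam x t + vecMulVec (x t) (x t) := by
  rw [Vm, Vm, Finset.sum_range_succ, add_assoc]

lemma posDef_Vm {lam : ℝ} (hlam : 0 < lam) (x : ℕ → Fin d → ℝ) (t : ℕ) :
    (Vm lam x t).PosDef := by
  have h1 : (lam • (1 : Matrix (Fin d) (Fin d) ℝ)).PosDef := by
    rw [smul_one_eq_diagonal]
    exact PosDef.diagonal fun _ => hlam
  refine h1.add_posSemidef ?_
  classical
  exact Finset.sum_induction _ _ (fun A B hA hB => hA.add hB) .zero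
    (fun s _ => posSemidef_vmv (x s))

lemma Vm_quad_lower (lam : ℝ) (x : ℕ → Fin d → ℝ) (t : ℕ) (v : Fin d → ℝ) :
    lam * (v ⬝ᵥ v) ≤ v ⬝ᵥ (Vm lam x t *ᵥ v) := by
  rw [Vm, Matrix.add_mulVec, smul_mulVec, one_mulVec, sum_mulVec',
    dotProduct_add, dotProduct_smul, smul_eq_mul]
  have h : 0 ≤ v ⬝ᵥ ∑ s ∈ Finset.range t, vecMulVec (x s) (x s) *ᵥ v := by
    rw [dotProduct_sum']
    refine Finset.sum_nonneg fun s _ => ?_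
    rw [vmv_mulVec, dotProduct_smul, smul_eq_mul, dotProduct_comm]
    exact mul_self_nonneg _
  linarith

lemma quad_nonneg {M : Matrix (Fin d) (Fin d) ℝ} (hM : M.PosDef) (y : Fin d → ℝ) :
    0 ≤ y ⬝ᵥ M⁻¹ *ᵥ y := by
  simpa using hM.inv.posSemidef.dotProduct_mulVec_nonneg y

lemma quad_le_one {lam a : ℝ} (ha2 : a ^ 2 ≤ lam)
    {M : Matrix (Fin d) (Fin d) ℝ} (hM : M.PosDef)
    (hlow : ∀ v, lam * (v ⬝ᵥ v) ≤ v ⬝ᵥ (M *ᵥ v))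
    {y : Fin d → ℝ} (hy : y ⬝ᵥ y ≤ a ^ 2) :
    y ⬝ᵥ M⁻¹ *ᵥ y ≤ 1 := by
  set u := M⁻¹ *ᵥ y with hu
  have hMu : M *ᵥ u = y := by
    rw [hu, mulVec_mulVec, mul_nonsing_inv _ (isUnit_iff_ne_zero.mpr hM.det_pos.ne'), one_mulVec]
  set q := y ⬝ᵥ u with hqdef
  have hq0 : 0 ≤ q := quad_nonneg hM y
  have huu : 0 ≤ u ⬝ᵥ u := dot_self_nonneg u
  have hlow' : lam * (u ⬝ᵥ u) ≤ q := by
    have h := hlow u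
    rw [hMu] at h
    rw [dotProduct_comm u y] at h
    exact h
  have hyy : 0 ≤ y ⬝ᵥ y := dot_self_nonneg y
  have hCS : q ^ 2 ≤ (y ⬝ᵥ y) * (u ⬝ᵥ u) := by
    have h := Finset.sum_mul_sq_le_sq_mul_sq Finset.univ y u
    rw [hqdef]
    simpa [dotProduct, sq] using h
  nlinarith [mul_le_mul_of_nonneg_right hy huu, mul_le_mul_of_nonneg_right ha2 huu]

lemma det_add_vmv {M : Matrix (Fin d) (Fin d) ℝ} (hM : M.PosDef) (y : Fin d → ℝ) :
    det (M + vecMulVec y y) = det M * (1 + y ⬝ᵥ M⁻¹ *ᵥ y) := by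
  have hu : IsUnit M.det := isUnit_iff_ne_zero.mpr hM.det_pos.ne'
  have h1 : M + vecMulVec y y = M * (1 + M⁻¹ * vecMulVec y y) := by
    rw [mul_add, mul_one, ← Matrix.mul_assoc, mul_nonsing_inv _ hu, Matrix.one_mul]
  rw [h1, det_mul]
  congr 1
  rw [vecMulVec_eq Unit, ← Matrix.mul_assoc, ← replicateCol_mulVec, det_one_add_replicateCol_mul_replicateRow]

lemma det_le_trace_pow (hd : 0 < d) {M : Matrix (Fin d) (Fin d) ℝ} (hM : M.PosSemidef) :
    det M ≤ (trace M / d) ^ d := by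
  have hH := hM.isHermitian
  set ev := hH.eigenvalues with hevdef
  have hev : ∀ i, 0 ≤ ev i := hM.eigenvalues_nonneg
  have hdet : det M = ∏ i, ev i := by
    rw [hH.det_eq_prod_eigenvalues]
    norm_num
    rfl
  have htr : trace M = ∑ i, ev i := by
    rw [hH.trace_eq_sum_eigenvalues]
    simp [hevdef]
  have hdR : (0:ℝ) < d := by exact_mod_cast hd
  have amgm := Real.geom_mean_le_arith_mean_weighted Finset.univ (fun _ => (d:ℝ)⁻¹) ev
    (fun i _ => by positivity)
    (by simp [Finset.card_univ, mul_comm]; field_simp)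
    (fun i _ => hev i)
  have hpow : ∀ i, ((ev i) ^ ((d:ℝ)⁻¹)) ^ (d:ℕ) = ev i := fun i => by
    rw [← Real.rpow_natCast (ev i ^ ((d:ℝ)⁻¹)), ← Real.rpow_mul (hev i),
      inv_mul_cancel₀ hdR.ne', Real.rpow_one]
  calc det M = ∏ i, ev i := hdet
    _ = (∏ i, (ev i) ^ ((d:ℝ)⁻¹)) ^ (d:ℕ) := by
        rw [← Finset.prod_pow]
        exact Finset.prod_congr rfl fun i _ => (hpow i).symm
    _ ≤ (∑ i, (d:ℝ)⁻¹ * ev i) ^ (d:ℕ) := by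
        exact pow_le_pow_left₀ (Finset.prod_nonneg fun i _ => Real.rpow_nonneg (hev i) _) amgm d
    _ = (trace M / d) ^ d := by
        rw [← Finset.mul_sum, htr, div_eq_inv_mul]

lemma half_le_log_one_add {u : ℝ} (h0 : 0 ≤ u) (h1 : u ≤ 1) :
    u / 2 ≤ Real.log (1 + u) := by
  have hpos : 0 < 1 + u := by linarith
  have h := Real.log_le_sub_one_of_pos (show (0:ℝ) < (1+u)⁻¹ by positivity)
  rw [Real.log_inv] at h
  have h2 : 1 - (1+u)⁻¹ ≤ Real.log (1 + u) := by linarith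
  have key : (1:ℝ) - (1+u)⁻¹ = u / (1+u) := by field_simp; ring
  have h3 : u / 2 ≤ 1 - (1+u)⁻¹ := by
    rw [key, div_le_div_iff₀ two_pos hpos]
    nlinarith
  linarith

lemma trace_Vm (lam : ℝ) (x : ℕ → Fin d → ℝ) (t : ℕ) :
    trace (Vm lam x t) = d * lam + ∑ s ∈ Finset.range t, x s ⬝ᵥ x s := by
  rw [Vm, trace_add, trace_smul, trace_one, trace_sum]
  have h : ∀ s, trace (vecMulVec (x s) (x s)) = x s ⬝ᵥ x s := fun s => by
    rw [vecMulVec_eq Unit, trace_replicateCol_mul_replicateRow]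
  simp only [h, Fintype.card_fin, smul_eq_mul]
  ring

end Stmt9Aux

open Stmt9Aux in
theorem stmt9 (d T : ℕ) (hd : 0 < d) (a lam : ℝ) (ha : 0 ≤ a)
    (hlam : max 1 (a ^ 2) ≤ lam)
    (x : ℕ → Fin d → ℝ) (hx : ∀ t, x t ⬝ᵥ x t ≤ a ^ 2) :
    ∑ t ∈ Finset.range T,
        (x t ⬝ᵥ
          (((lam • (1 : Matrix (Fin d) (Fin d) ℝ)
              + ∑ s ∈ Finset.range t, vecMulVec (x s) (x s))⁻¹) *ᵥ x t))
      ≤ 2 * d * Real.log (1 + a ^ 2 * T / (d * lam)) := by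
  have hlam1 : (1:ℝ) ≤ lam := le_trans (le_max_left _ _) hlam
  have ha2 : a ^ 2 ≤ lam := le_trans (le_max_right _ _) hlam
  have hlam0 : (0:ℝ) < lam := lt_of_lt_of_le one_pos hlam1
  have hdR : (0:ℝ) < d := by exact_mod_cast hd
  set q : ℕ → ℝ := fun t => x t ⬝ᵥ (Vm lam x t)⁻¹ *ᵥ x t with hqdef
  have hgoal : ∑ t ∈ Finset.range T,
      (x t ⬝ᵥ
        (((lam • (1 : Matrix (Fin d) (Fin d) ℝ)
            + ∑ s ∈ Finset.range t, vecMulVec (x s) (x s))⁻¹) *ᵥ x t))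
      = ∑ t ∈ Finset.range T, q t := rfl
  rw [hgoal]
  have hPD : ∀ t, (Vm lam x t).PosDef := posDef_Vm hlam0 x
  have hq0 : ∀ t, 0 ≤ q t := fun t => quad_nonneg (hPD t) (x t)
  have hq1 : ∀ t, q t ≤ 1 := fun t =>
    quad_le_one ha2 (hPD t) (Vm_quad_lower lam x t) (hx t)
  -- telescoping identity for the log-determinant
  have hlogdet : ∀ t : ℕ, Real.log ((Vm lam x t).det)
      = d * Real.log lam + ∑ s ∈ Finset.range t, Real.log (1 + q s) := by
    intro t
    induction t with
    | zero =>
        simp only [Vm, Finset.range_zero, Finset.sum_empty, add_zero]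
        rw [det_smul, det_one, mul_one, Fintype.card_fin, Real.log_pow]
    | succ t ih =>
        rw [Vm_succ, det_add_vmv (hPD t) (x t), Real.log_mul (hPD t).det_pos.ne'
          (by have := hq0 t; positivity), ih, Finset.sum_range_succ]
        ring
  -- trace bound
  have htrace_le : trace (Vm lam x T) ≤ d * lam + a ^ 2 * T := by
    rw [trace_Vm]
    have : ∑ s ∈ Finset.range T, x s ⬝ᵥ x s ≤ ∑ s ∈ Finset.range T, a ^ 2 :=
      Finset.sum_le_sum fun s _ => hx s
    simp only [Finset.sum_const, Finset.card_range, nsmul_eq_mul] at this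
    linarith [this]
  have htrace_ge : (d : ℝ) * lam ≤ trace (Vm lam x T) := by
    rw [trace_Vm]
    have : 0 ≤ ∑ s ∈ Finset.range T, x s ⬝ᵥ x s :=
      Finset.sum_nonneg fun s _ => dot_self_nonneg (x s)
    linarith
  have htrpos : 0 < trace (Vm lam x T) := lt_of_lt_of_le (by positivity) htrace_ge
  -- det ≤ (trace/d)^d and conclude log bound
  have hdet_le : (Vm lam x T).det ≤ (trace (Vm lam x T) / d) ^ d :=
    det_le_trace_pow hd (hPD T).posSemidef
  have hlog_det_le : Real.log ((Vm lam x T).det)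
      ≤ d * Real.log (trace (Vm lam x T) / d) := by
    calc Real.log ((Vm lam x T).det) ≤ Real.log ((trace (Vm lam x T) / d) ^ d) :=
          Real.log_le_log (hPD T).det_pos hdet_le
      _ = d * Real.log (trace (Vm lam x T) / d) := by rw [Real.log_pow]
  -- main chain
  have key : ∑ t ∈ Finset.range T, Real.log (1 + q t)
      ≤ d * Real.log (1 + a ^ 2 * T / (d * lam)) := by
    have h1 : ∑ t ∈ Finset.range T, Real.log (1 + q t)
        = Real.log ((Vm lam x T).det) - d * Real.log lam := by
      rw [hlogdet T]; ring
    rw [h1]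
    have h2 : Real.log (trace (Vm lam x T) / d) - Real.log lam
        = Real.log (trace (Vm lam x T) / (d * lam)) := by
      rw [← Real.log_div (by positivity) hlam0.ne']
      congr 1
      field_simp
    have h3 : Real.log (trace (Vm lam x T) / (d * lam))
        ≤ Real.log (1 + a ^ 2 * T / (d * lam)) := by
      apply Real.log_le_log (by positivity)
      rw [div_le_iff₀ (by positivity)]
      have hT0 : (0:ℝ) ≤ (T:ℝ) := Nat.cast_nonneg T
      calc trace (Vm lam x T) ≤ d * lam + a ^ 2 * T := htrace_le
        _ = (1 + a ^ 2 * T / (d * lam)) * (d * lam) := by field_simp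
    calc Real.log ((Vm lam x T).det) - d * Real.log lam
        ≤ d * Real.log (trace (Vm lam x T) / d) - d * Real.log lam := by linarith
      _ = d * (Real.log (trace (Vm lam x T) / d) - Real.log lam) := by ring
      _ = d * Real.log (trace (Vm lam x T) / (d * lam)) := by rw [h2]
      _ ≤ d * Real.log (1 + a ^ 2 * T / (d * lam)) := by
          exact mul_le_mul_of_nonneg_left h3 (le_of_lt hdR)
  calc ∑ t ∈ Finset.range T, q t
      ≤ ∑ t ∈ Finset.range T, 2 * Real.log (1 + q t) := by
        refine Finset.sum_le_sum fun t _ => ?_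
        have := half_le_log_one_add (hq0 t) (hq1 t)
        linarith
    _ = 2 * ∑ t ∈ Finset.range T, Real.log (1 + q t) := by
        rw [Finset.mul_sum]
    _ ≤ 2 * (d * Real.log (1 + a ^ 2 * T / (d * lam))) :=
        mul_le_mul_of_nonneg_left key (by norm_num)
    _ = 2 * d * Real.log (1 + a ^ 2 * T / (d * lam)) := by ring
end
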